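/- Let G be a connected graph with principal eigenvector x, and let u, u', v, v' be four distinct vertices with uv' ∈ E(G), u'v ∈ E(G), uv ∉ E(G), u'v' ∉ E(G). If x_u ≥ x_{u'} and x_v ≥ x_{v'}, then the graph G' = G + uv + u'v' − uv' − u'v satisfies λ₁(G') ≥ λ₁(G). -/

import Mathlib

open Finset Matrix

/-- The spectral radius (largest adjacency eigenvalue) of a finite simple graph. -/
noncomputable def lam1 {V : Type*} [Fintype V] [DecidableEq V] (G : SimpleGraph V) : ℝ := by
  classical
  exact sSup {μ : ℝ | Module.End.HasEigenvalue (Matrix.toLin' (G.adjMatrix ℝ)) μ}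

lemma lam1_eq {V : Type*} [Fintype V] [DecidableEq V] (G : SimpleGraph V)
    [inst : DecidableRel G.Adj] :
    lam1 G = sSup {μ : ℝ | Module.End.HasEigenvalue (Matrix.toLin' (G.adjMatrix ℝ)) μ} := by
  unfold lam1
  congr!

lemma eig_set_eq {V : Type*} [Fintype V] [DecidableEq V] {A : Matrix V V ℝ}
    (hA : A.IsHermitian) :
    {μ : ℝ | Module.End.HasEigenvalue (Matrix.toLin' A) μ} = Set.range hA.eigenvalues := by
  have h1 : {μ : ℝ | Module.End.HasEigenvalue (Matrix.toLin' A) μ} = spectrum ℝ A := by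
    ext μ
    rw [Set.mem_setOf_eq, Module.End.hasEigenvalue_iff_mem_spectrum]
    have : Matrix.toLin' A = Matrix.toLinAlgEquiv' A := rfl
    rw [this, AlgEquiv.spectrum_eq]
  have h2 : A = (hA.eigenvectorUnitary : Matrix V V ℝ) * diagonal hA.eigenvalues *
      (star (hA.eigenvectorUnitary : Matrix V V ℝ)) := by
    have := hA.spectral_theorem
    rwa [show (RCLike.ofReal : ℝ → ℝ) ∘ hA.eigenvalues = hA.eigenvalues by
      funext i; simp [Function.comp]] at this
  rw [h1]
  conv_lhs => rw [h2]
  rw [Unitary.spectrum_star_right_conjugate, spectrum_diagonal]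

lemma spectral_real {V : Type*} [Fintype V] [DecidableEq V] {A : Matrix V V ℝ}
    (hA : A.IsHermitian) :
    A = (hA.eigenvectorUnitary : Matrix V V ℝ) * diagonal hA.eigenvalues *
      star (hA.eigenvectorUnitary : Matrix V V ℝ) := by
  have := hA.spectral_theorem
  rwa [show (RCLike.ofReal : ℝ → ℝ) ∘ hA.eigenvalues = hA.eigenvalues by
    funext i; simp [Function.comp]] at this

lemma isHermitian_adjMatrix' {V : Type*} [Fintype V] [DecidableEq V] (G : SimpleGraph V)
    [DecidableRel G.Adj] : (G.adjMatrix ℝ).IsHermitian := by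
  rw [Matrix.IsHermitian, conjTranspose_eq_transpose_of_trivial]
  exact G.isSymm_adjMatrix

lemma rayleigh_le_lam1 {V : Type*} [Fintype V] [DecidableEq V] (G : SimpleGraph V)
    [DecidableRel G.Adj] (y : V → ℝ) (hy : ∑ v, y v ^ 2 = 1) :
    y ⬝ᵥ (G.adjMatrix ℝ *ᵥ y) ≤ lam1 G := by
  set A := G.adjMatrix ℝ with hAdef
  have hA : A.IsHermitian := isHermitian_adjMatrix' G
  set U := (hA.eigenvectorUnitary : Matrix V V ℝ) with hUdef
  set d := hA.eigenvalues with hddef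
  have hstar : star U = Uᵀ := by
    rw [star_eq_conjTranspose, conjTranspose_eq_transpose_of_trivial]
  have hU1 : U * star U = 1 := mem_unitaryGroup_iff.mp hA.eigenvectorUnitary.2
  set c := star U *ᵥ y with hcdef
  have key : ∀ B : Matrix V V ℝ, y ⬝ᵥ (U *ᵥ (B *ᵥ y)) = c ⬝ᵥ (B *ᵥ y) := by
    intro B
    rw [dotProduct_mulVec y U, ← mulVec_transpose, ← hstar]
  have hone : c ⬝ᵥ c = 1 := by
    have : c ⬝ᵥ c = y ⬝ᵥ (U *ᵥ c) := by
      rw [dotProduct_mulVec y U, ← mulVec_transpose, ← hstar]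
    rw [this, hcdef, mulVec_mulVec, hU1, one_mulVec]
    simpa [dotProduct, ← pow_two] using hy
  have hray : y ⬝ᵥ (A *ᵥ y) = ∑ i, d i * c i ^ 2 := by
    conv_lhs => rw [spectral_real hA, ← hUdef, ← hddef]
    rw [mul_assoc, ← mulVec_mulVec, key, ← mulVec_mulVec, ← hcdef]
    simp [dotProduct, mulVec_diagonal, pow_two]
    ring_nf
    exact Finset.sum_congr rfl fun i _ => by ring
  have hbdd : BddAbove (Set.range d) := (Set.finite_range d).bddAbove
  have hle : ∀ i, d i ≤ lam1 G := by
    intro i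
    rw [lam1_eq G, eig_set_eq hA]
    exact le_csSup hbdd ⟨i, rfl⟩
  calc y ⬝ᵥ (A *ᵥ y) = ∑ i, d i * c i ^ 2 := hray
    _ ≤ ∑ i, lam1 G * c i ^ 2 :=
        Finset.sum_le_sum fun i _ => mul_le_mul_of_nonneg_right (hle i) (sq_nonneg _)
    _ = lam1 G * (c ⬝ᵥ c) := by rw [← Finset.mul_sum]; simp [dotProduct, pow_two]
    _ = lam1 G := by rw [hone, mul_one]

lemma adjMatrix_swap {V : Type*} [Fintype V] [DecidableEq V] (G : SimpleGraph V)
    [DecidableRel G.Adj]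
    (u u' v v' : V)
    (huu' : u ≠ u') (huv : u ≠ v) (huv' : u ≠ v') (hu'v : u' ≠ v)
    (hu'v' : u' ≠ v') (hvv' : v ≠ v')
    (he1 : G.Adj u v') (he2 : G.Adj u' v)
    (hne1 : ¬ G.Adj u v) (hne2 : ¬ G.Adj u' v')
    [inst2 : DecidableRel (SimpleGraph.fromEdgeSet
      ((G.edgeSet ∪ {s(u, v), s(u', v')}) \ {s(u, v'), s(u', v)})).Adj] :
    (SimpleGraph.fromEdgeSet ((G.edgeSet ∪ {s(u, v), s(u', v')}) \ {s(u, v'), s(u', v)})).adjMatrix ℝ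
      = G.adjMatrix ℝ
      + (Matrix.single u v 1 + Matrix.single v u 1 + Matrix.single u' v' 1 + Matrix.single v' u' 1)
      - (Matrix.single u v' 1 + Matrix.single v' u 1 + Matrix.single u' v 1 + Matrix.single v u' 1) := by
  have he1' : G.Adj v' u := he1.symm
  have he2' : G.Adj v u' := he2.symm
  have hne1' : ¬ G.Adj v u := fun h => hne1 h.symm
  have hne2' : ¬ G.Adj v' u' := fun h => hne2 h.symm
  ext a b
  simp only [SimpleGraph.adjMatrix_apply, Pi.add_apply, Pi.sub_apply,
    SimpleGraph.fromEdgeSet_adj, Set.mem_diff, Set.mem_union, Set.mem_insert_iff,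
    Set.mem_singleton_iff, SimpleGraph.mem_edgeSet, Sym2.eq_iff, Matrix.single, of_apply]
  by_cases hab : a = b
  · subst hab
    have n1 : ¬(u = a ∧ v = a) := by rintro ⟨rfl, h⟩; exact huv h.symm
    have n2 : ¬(v = a ∧ u = a) := by rintro ⟨rfl, h⟩; exact huv h
    have n3 : ¬(u' = a ∧ v' = a) := by rintro ⟨rfl, h⟩; exact hu'v' h.symm
    have n4 : ¬(v' = a ∧ u' = a) := by rintro ⟨rfl, h⟩; exact hu'v' h
    have n5 : ¬(u = a ∧ v' = a) := by rintro ⟨rfl, h⟩; exact huv' h.symm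
    have n6 : ¬(v' = a ∧ u = a) := by rintro ⟨rfl, h⟩; exact huv' h
    have n7 : ¬(u' = a ∧ v = a) := by rintro ⟨rfl, h⟩; exact hu'v h.symm
    have n8 : ¬(v = a ∧ u' = a) := by rintro ⟨rfl, h⟩; exact hu'v h
    simp [n1, n2, n3, n4, n5, n6, n7, n8]
  · by_cases hG : G.Adj a b
    · by_cases r1 : a = u ∧ b = v'
      · obtain ⟨rfl, rfl⟩ := r1; simp_all [eq_comm]
      · by_cases r2 : a = v' ∧ b = u
        · obtain ⟨rfl, rfl⟩ := r2; simp_all [eq_comm]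
        · by_cases r3 : a = u' ∧ b = v
          · obtain ⟨rfl, rfl⟩ := r3; simp_all [eq_comm]
          · by_cases r4 : a = v ∧ b = u'
            · obtain ⟨rfl, rfl⟩ := r4; simp_all [eq_comm]
            · have n1 : ¬(u = a ∧ v = b) := by rintro ⟨rfl, rfl⟩; exact hne1 hG
              have n2 : ¬(v = a ∧ u = b) := by rintro ⟨rfl, rfl⟩; exact hne1' hG
              have n3 : ¬(u' = a ∧ v' = b) := by rintro ⟨rfl, rfl⟩; exact hne2 hG
              have n4 : ¬(v' = a ∧ u' = b) := by rintro ⟨rfl, rfl⟩; exact hne2' hG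
              have m1 : ¬(u = a ∧ v' = b) := fun h => r1 ⟨h.1.symm, h.2.symm⟩
              have m2 : ¬(v' = a ∧ u = b) := fun h => r2 ⟨h.1.symm, h.2.symm⟩
              have m3 : ¬(u' = a ∧ v = b) := fun h => r3 ⟨h.1.symm, h.2.symm⟩
              have m4 : ¬(v = a ∧ u' = b) := fun h => r4 ⟨h.1.symm, h.2.symm⟩
              have i1 : a = u → ¬ b = v' := fun h1 h2 => r1 ⟨h1, h2⟩
              have i2 : a = v' → ¬ b = u := fun h1 h2 => r2 ⟨h1, h2⟩
              have i3 : a = u' → ¬ b = v := fun h1 h2 => r3 ⟨h1, h2⟩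
              have i4 : a = v → ¬ b = u' := fun h1 h2 => r4 ⟨h1, h2⟩
              simp only [hG, hab, true_or, not_false_iff]
              simp [n1, n2, n3, n4, m1, m2, m3, m4]
              exact if_congr (iff_of_true ⟨⟨⟨i1, i2⟩, i3, i4⟩, hab⟩ hG) rfl rfl
    · by_cases p1 : a = u ∧ b = v
      · obtain ⟨rfl, rfl⟩ := p1; simp_all [eq_comm]
      · by_cases p2 : a = v ∧ b = u
        · obtain ⟨rfl, rfl⟩ := p2; simp_all [eq_comm]
        · by_cases p3 : a = u' ∧ b = v'
          · obtain ⟨rfl, rfl⟩ := p3; simp_all [eq_comm]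
          · by_cases p4 : a = v' ∧ b = u'
            · obtain ⟨rfl, rfl⟩ := p4; simp_all [eq_comm]
            · have q1 : ¬(u = a ∧ v' = b) := by rintro ⟨rfl, rfl⟩; exact hG he1
              have q2 : ¬(v' = a ∧ u = b) := by rintro ⟨rfl, rfl⟩; exact hG he1'
              have q3 : ¬(u' = a ∧ v = b) := by rintro ⟨rfl, rfl⟩; exact hG he2
              have q4 : ¬(v = a ∧ u' = b) := by rintro ⟨rfl, rfl⟩; exact hG he2'
              have w1 : ¬(u = a ∧ v = b) := fun h => p1 ⟨h.1.symm, h.2.symm⟩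
              have w2 : ¬(v = a ∧ u = b) := fun h => p2 ⟨h.1.symm, h.2.symm⟩
              have w3 : ¬(u' = a ∧ v' = b) := fun h => p3 ⟨h.1.symm, h.2.symm⟩
              have w4 : ¬(v' = a ∧ u' = b) := fun h => p4 ⟨h.1.symm, h.2.symm⟩
              have i1 : a = u → ¬ b = v' := fun h1 h2 => hG (by rw [h1, h2]; exact he1)
              have i2 : a = v' → ¬ b = u := fun h1 h2 => hG (by rw [h1, h2]; exact he1')
              have i3 : a = u' → ¬ b = v := fun h1 h2 => hG (by rw [h1, h2]; exact he2)
              have i4 : a = v → ¬ b = u' := fun h1 h2 => hG (by rw [h1, h2]; exact he2')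
              simp [hG, hab, q1, q2, q3, q4, w1, w2, w3, w4]
              intro hP
              rcases hP with (⟨rfl, rfl⟩ | ⟨rfl, rfl⟩) | (⟨rfl, rfl⟩ | ⟨rfl, rfl⟩)
              · exact (p1 ⟨rfl, rfl⟩).elim
              · exact (p2 ⟨rfl, rfl⟩).elim
              · exact (p3 ⟨rfl, rfl⟩).elim
              · exact (p4 ⟨rfl, rfl⟩).elim

theorem stmt_3 {V : Type*} [Fintype V] [DecidableEq V] (G : SimpleGraph V)
    [DecidableRel G.Adj] (hconn : G.Connected) (x : V → ℝ)
    (hpos : ∀ w, 0 < x w)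
    (hunit : ∑ v, x v ^ 2 = 1)
    (heig : G.adjMatrix ℝ *ᵥ x = lam1 G • x)
    (u u' v v' : V)
    (huu' : u ≠ u') (huv : u ≠ v) (huv' : u ≠ v') (hu'v : u' ≠ v)
    (hu'v' : u' ≠ v') (hvv' : v ≠ v')
    (he1 : G.Adj u v') (he2 : G.Adj u' v)
    (hne1 : ¬ G.Adj u v) (hne2 : ¬ G.Adj u' v')
    (hxu : x u' ≤ x u) (hxv : x v' ≤ x v) :
    lam1 (SimpleGraph.fromEdgeSet
      ((G.edgeSet ∪ {s(u, v), s(u', v')}) \ {s(u, v'), s(u', v)})) ≥ lam1 G := by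
  set G' := SimpleGraph.fromEdgeSet
      ((G.edgeSet ∪ {s(u, v), s(u', v')}) \ {s(u, v'), s(u', v)}) with hG'
  letI inst2 : DecidableRel G'.Adj := Classical.decRel _
  have hxx : x ⬝ᵥ x = 1 := by simpa [dotProduct, ← pow_two] using hunit
  have hlamG : x ⬝ᵥ (G.adjMatrix ℝ *ᵥ x) = lam1 G := by
    rw [heig, dotProduct_smul, smul_eq_mul, hxx, mul_one]
  have hM := adjMatrix_swap G u u' v v' huu' huv huv' hu'v hu'v' hvv' he1 he2 hne1 hne2
  have hquad : x ⬝ᵥ (G'.adjMatrix ℝ *ᵥ x)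
      = lam1 G + 2 * ((x u - x u') * (x v - x v')) := by
    rw [show G'.adjMatrix ℝ = _ from hM, sub_mulVec, add_mulVec, dotProduct_sub, dotProduct_add, hlamG]
    simp only [add_mulVec, dotProduct_add, single_mulVec, one_mul]
    simp only [dotProduct, Function.update_apply, Pi.zero_apply, mul_ite, mul_zero,
      Finset.sum_ite_eq', Finset.mem_univ, if_true]
    ring
  have h2 : lam1 G ≤ x ⬝ᵥ (G'.adjMatrix ℝ *ᵥ x) := by
    rw [hquad]
    nlinarith [sub_nonneg.mpr hxu, sub_nonneg.mpr hxv]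
  exact le_trans h2 (rayleigh_le_lam1 G' x hunit)
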